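/- For every p ∈ (0,1) and every real q ≥ 1, the ℓ-random-cluster measure μ_{p,q} on X is positively associated: for any two functions f, g : {F : F ⊆ E} → ℝ that are increasing with respect to inclusion (Y ⊆ Y' implies f(Y) ≤ f(Y') and g(Y) ≤ g(Y')), one has Σ_F μ_{p,q}(F)·f(F)·g(F) ≥ (Σ_F μ_{p,q}(F)·f(F))·(Σ_F μ_{p,q}(F)·g(F)). -/

import Mathlib

open Finset

/-- Positive association of the `ℓ`-random-cluster measure: for `p ∈ (0,1)`,
`q ≥ 1`, and any two inclusion-increasing functions `f, g : Finset E → ℝ`,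
`μ_{p,q}(fg) ≥ μ_{p,q}(f) μ_{p,q}(g)`. -/
theorem stmt_12 {K : Type*} [Field K] {E : Type*} [Fintype E] [DecidableEq E]
    {V : Type*} [AddCommGroup V] [Module K V] [FiniteDimensional K V]
    (bdry : (E → K) →ₗ[K] V)
    (r : Finset E → ℕ)
    (hr : ∀ F : Finset E, r F = Module.finrank K (Submodule.span K
      ((fun σ => bdry (Pi.single σ 1)) '' (F : Set E))))
    (κ : ℕ) (hκ : r Finset.univ ≤ κ)
    (p q : ℝ) (hp : p ∈ Set.Ioo (0 : ℝ) 1) (hq : 1 ≤ q)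
    (w : Finset E → ℝ)
    (hw : ∀ F : Finset E,
      w F = p ^ F.card * (1 - p) ^ (Fintype.card E - F.card) * q ^ (κ - r F))
    (Z : ℝ) (hZ : Z = ∑ F : Finset E, w F)
    (μ : Finset E → ℝ) (hμ : ∀ F : Finset E, μ F = w F / Z)
    (f g : Finset E → ℝ)
    (hf : ∀ Y Y' : Finset E, Y ⊆ Y' → f Y ≤ f Y')
    (hg : ∀ Y Y' : Finset E, Y ⊆ Y' → g Y ≤ g Y') :
    (∑ F : Finset E, μ F * f F) * (∑ F : Finset E, μ F * g F) ≤
      ∑ F : Finset E, μ F * (f F * g F) := by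
  classical
  obtain ⟨hp0, hp1⟩ := hp
  have hp1' : (0:ℝ) < 1 - p := by linarith
  have hq0 : (0:ℝ) < q := lt_of_lt_of_le one_pos hq
  set n := Fintype.card E with hn
  -- positivity of w and Z
  have hwpos : ∀ F : Finset E, 0 < w F := by
    intro F; rw [hw]; positivity
  have hZpos : 0 < Z := by
    rw [hZ]; exact Finset.sum_pos (fun F _ => hwpos F) ⟨∅, mem_univ _⟩
  -- rank is monotone
  have hmono : ∀ F G : Finset E, F ⊆ G → r F ≤ r G := by
    intro F G h
    rw [hr, hr]
    exact Submodule.finrank_mono (Submodule.span_mono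
      (Set.image_mono (by exact_mod_cast h)))
  have hκ' : ∀ F : Finset E, r F ≤ κ := fun F =>
    le_trans (hmono F Finset.univ (subset_univ F)) hκ
  -- rank is submodular
  have hsub : ∀ a b : Finset E, r (a ∪ b) + r (a ∩ b) ≤ r a + r b := by
    intro a b
    rw [hr, hr, hr, hr]
    set φ : E → V := fun σ => bdry (Pi.single σ 1)
    have h1 : Submodule.span K (φ '' ((a ∪ b : Finset E) : Set E)) =
        Submodule.span K (φ '' (a : Set E)) ⊔ Submodule.span K (φ '' (b : Set E)) := by
      rw [coe_union, Set.image_union, Submodule.span_union]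
    have h2 : Submodule.span K (φ '' ((a ∩ b : Finset E) : Set E)) ≤
        Submodule.span K (φ '' (a : Set E)) ⊓ Submodule.span K (φ '' (b : Set E)) := by
      refine le_inf (Submodule.span_mono (Set.image_mono ?_))
        (Submodule.span_mono (Set.image_mono ?_))
      · rw [coe_inter]; exact Set.inter_subset_left
      · rw [coe_inter]; exact Set.inter_subset_right
    have h3 := Submodule.finrank_sup_add_finrank_inf_eq
      (Submodule.span K (φ '' (a : Set E))) (Submodule.span K (φ '' (b : Set E)))
    have h4 := Submodule.finrank_mono h2
    rw [h1]
    omega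
  -- cards
  have hcle : ∀ c : Finset E, c.card ≤ n := fun c => c.card_le_univ.trans_eq card_univ
  -- log-supermodularity of w
  have hwsup : ∀ a b : Finset E, w a * w b ≤ w (a ∩ b) * w (a ∪ b) := by
    intro a b
    rw [hw, hw, hw, hw]
    have hcard : (a ∩ b).card + (a ∪ b).card = a.card + b.card :=
      card_inter_add_card_union a b
    have e1 : p ^ a.card * p ^ b.card = p ^ (a ∩ b).card * p ^ (a ∪ b).card := by
      rw [← pow_add, ← pow_add, hcard]
    have e2 : (1 - p) ^ (n - a.card) * (1 - p) ^ (n - b.card) =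
        (1 - p) ^ (n - (a ∩ b).card) * (1 - p) ^ (n - (a ∪ b).card) := by
      rw [← pow_add, ← pow_add]
      congr 1
      have := hcle a; have := hcle b; have := hcle (a ∩ b); have := hcle (a ∪ b)
      omega
    have e3 : q ^ (κ - r a) * q ^ (κ - r b) ≤
        q ^ (κ - r (a ∩ b)) * q ^ (κ - r (a ∪ b)) := by
      rw [← pow_add, ← pow_add]
      apply pow_le_pow_right₀ hq
      have := hsub a b; have := hκ' a; have := hκ' b
      have := hκ' (a ∩ b); have := hκ' (a ∪ b)
      omega
    calc p ^ a.card * (1 - p) ^ (n - a.card) * q ^ (κ - r a) *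
          (p ^ b.card * (1 - p) ^ (n - b.card) * q ^ (κ - r b))
        = (p ^ a.card * p ^ b.card) * ((1 - p) ^ (n - a.card) * (1 - p) ^ (n - b.card)) *
          (q ^ (κ - r a) * q ^ (κ - r b)) := by ring
      _ = (p ^ (a ∩ b).card * p ^ (a ∪ b).card) *
          ((1 - p) ^ (n - (a ∩ b).card) * (1 - p) ^ (n - (a ∪ b).card)) *
          (q ^ (κ - r a) * q ^ (κ - r b)) := by rw [e1, e2]
      _ ≤ (p ^ (a ∩ b).card * p ^ (a ∪ b).card) *
          ((1 - p) ^ (n - (a ∩ b).card) * (1 - p) ^ (n - (a ∪ b).card)) *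
          (q ^ (κ - r (a ∩ b)) * q ^ (κ - r (a ∪ b))) := by
            apply mul_le_mul_of_nonneg_left e3; positivity
      _ = p ^ (a ∩ b).card * (1 - p) ^ (n - (a ∩ b).card) * q ^ (κ - r (a ∩ b)) *
          (p ^ (a ∪ b).card * (1 - p) ^ (n - (a ∪ b).card) * q ^ (κ - r (a ∪ b))) := by ring
  -- normalized measure
  have hμpos : ∀ F : Finset E, 0 < μ F := by
    intro F; rw [hμ]; exact div_pos (hwpos F) hZpos
  have hμnn : (0 : Finset E → ℝ) ≤ μ := fun F => (hμpos F).le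
  have hsum1 : ∑ F : Finset E, μ F = 1 := by
    simp only [hμ]
    rw [← Finset.sum_div, ← hZ, div_self (ne_of_gt hZpos)]
  have hμsup : ∀ a b : Finset E, μ a * μ b ≤ μ (a ⊓ b) * μ (a ⊔ b) := by
    intro a b
    simp only [hμ, inf_eq_inter, sup_eq_union, div_mul_div_comm]
    exact div_le_div_of_nonneg_right (hwsup a b) (by positivity)
  -- shifted nonnegative monotone functions
  set f' : Finset E → ℝ := fun F => f F - f ∅ with hf'
  set g' : Finset E → ℝ := fun F => g F - g ∅ with hg'
  have hf'0 : (0 : Finset E → ℝ) ≤ f' := fun F => sub_nonneg.2 (hf ∅ F (empty_subset F))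
  have hg'0 : (0 : Finset E → ℝ) ≤ g' := fun F => sub_nonneg.2 (hg ∅ F (empty_subset F))
  have hf'm : Monotone f' := fun Y Y' h => sub_le_sub_right (hf Y Y' h) _
  have hg'm : Monotone g' := fun Y Y' h => sub_le_sub_right (hg Y Y' h) _
  have key := fkg f' g' μ hμnn hf'0 hg'0 hf'm hg'm hμsup
  set A := ∑ F : Finset E, μ F * f F with hA
  set B := ∑ F : Finset E, μ F * g F with hB
  set C := ∑ F : Finset E, μ F * (f F * g F) with hC
  have h1 : ∑ F : Finset E, μ F * f' F = A - f ∅ := by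
    have : ∀ F : Finset E, μ F * f' F = μ F * f F - f ∅ * μ F := fun F => by
      simp only [hf']; ring
    rw [Finset.sum_congr rfl (fun F _ => this F), Finset.sum_sub_distrib,
      ← Finset.mul_sum, hsum1, mul_one]
  have h2 : ∑ F : Finset E, μ F * g' F = B - g ∅ := by
    have : ∀ F : Finset E, μ F * g' F = μ F * g F - g ∅ * μ F := fun F => by
      simp only [hg']; ring
    rw [Finset.sum_congr rfl (fun F _ => this F), Finset.sum_sub_distrib,
      ← Finset.mul_sum, hsum1, mul_one]
  have h3 : ∑ F : Finset E, μ F * (f' F * g' F) =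
      C - g ∅ * A - f ∅ * B + f ∅ * g ∅ := by
    have : ∀ F : Finset E, μ F * (f' F * g' F) =
        μ F * (f F * g F) - g ∅ * (μ F * f F) - f ∅ * (μ F * g F) +
          (f ∅ * g ∅) * μ F := fun F => by
      simp only [hf', hg']; ring
    rw [Finset.sum_congr rfl (fun F _ => this F)]
    rw [Finset.sum_add_distrib, Finset.sum_sub_distrib, Finset.sum_sub_distrib,
      ← Finset.mul_sum, ← Finset.mul_sum, ← Finset.mul_sum, hsum1, mul_one]
  rw [h1, h2, h3, hsum1, one_mul] at key
  nlinarith [key]
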